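/- Let T_1,...,T_m (m ≥ 2) be pairwise vertex-disjoint trees, where T_i has a distinguished root w_i, and let T be the tree obtained by adding a new vertex w joined by an edge to each of w_1,...,w_m. Assume that for each i, either T_i consists of the single vertex w_i, or w_i has degree at least 2 in T_i. Let l_i be the number of pendent vertices of T_i, let l = l_1 + ... + l_m, and let d'_{T_i}(w_i) be the sum of the distances in T_i from w_i to all pendent vertices of T_i. Then TW(T) = Σ_{i=1}^m [ TW(T_i) + (l - l_i)·d'_{T_i}(w_i) - l_i² ] + l². -/

import Mathlib

open Finset

/-- The pendent vertices of a graph on a finite vertex type: the vertices of degree at most 1.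
For a tree this is the set of vertices of degree 1, except that a one-vertex tree has its
unique vertex as its unique pendent vertex. -/
noncomputable def pendentFinset {V : Type*} [Fintype V] (G : SimpleGraph V) : Finset V := by
  classical exact univ.filter (fun v => G.degree v ≤ 1)

/-- The terminal Wiener index of a graph: the sum of the distances over all unordered pairs of
pendent vertices, i.e. half of the sum over all ordered pairs of pendent vertices. -/
noncomputable def terminalWienerIndex {V : Type*} [Fintype V] (G : SimpleGraph V) : ℕ :=
  (∑ u ∈ pendentFinset G, ∑ v ∈ pendentFinset G, G.dist u v) / 2

/-- `d'_G(w)`: the sum of the distances in `G` between `w` and all pendent vertices of `G`. -/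
noncomputable def pendentDistSum {V : Type*} [Fintype V] (G : SimpleGraph V) (w : V) : ℕ :=
  ∑ v ∈ pendentFinset G, G.dist w v

/-- The tree obtained from pairwise vertex-disjoint rooted trees `T i` (with root `w i`) by
adding a new vertex `none` joined by an edge to each of the roots `w i`. -/
def joinTrees {ι : Type*} {V : ι → Type*} (T : ∀ i, SimpleGraph (V i)) (w : ∀ i, V i) :
    SimpleGraph (Option (Σ i, V i)) :=
  SimpleGraph.fromRel (fun x y =>
    (∃ i : ι, x = none ∧ y = some ⟨i, w i⟩) ∨
    (∃ (i : ι) (a b : V i), x = some ⟨i, a⟩ ∧ y = some ⟨i, b⟩ ∧ (T i).Adj a b))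

section Join

variable {ι : Type*} {V : ι → Type*} (T : ∀ i, SimpleGraph (V i)) (w : ∀ i, V i)

lemma joinTrees_adj {x y : Option (Σ i, V i)} :
    (joinTrees T w).Adj x y ↔
      (∃ i, x = none ∧ y = some ⟨i, w i⟩) ∨ (∃ i, x = some ⟨i, w i⟩ ∧ y = none) ∨
      (∃ (i : ι) (a b : V i), x = some ⟨i, a⟩ ∧ y = some ⟨i, b⟩ ∧ (T i).Adj a b) := by
  rw [joinTrees, SimpleGraph.fromRel_adj]
  constructor
  · rintro ⟨hne, (⟨i, rfl, rfl⟩ | ⟨i, a, b, rfl, rfl, hab⟩) | (⟨i, rfl, rfl⟩ | ⟨i, a, b, rfl, rfl, hab⟩)⟩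
    · exact Or.inl ⟨i, rfl, rfl⟩
    · exact Or.inr (Or.inr ⟨i, a, b, rfl, rfl, hab⟩)
    · exact Or.inr (Or.inl ⟨i, rfl, rfl⟩)
    · exact Or.inr (Or.inr ⟨i, b, a, rfl, rfl, hab.symm⟩)
  · rintro (⟨i, rfl, rfl⟩ | ⟨i, rfl, rfl⟩ | ⟨i, a, b, rfl, rfl, hab⟩)
    · exact ⟨by simp, Or.inl (Or.inl ⟨i, rfl, rfl⟩)⟩
    · exact ⟨by simp, Or.inr (Or.inl ⟨i, rfl, rfl⟩)⟩
    · refine ⟨by simp [hab.ne], Or.inl (Or.inr ⟨i, a, b, rfl, rfl, hab⟩)⟩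

open scoped Classical in
noncomputable def projMap (i : ι) : Option (Σ j, V j) → V i
  | none => w i
  | some x => if h : x.1 = i then h ▸ x.2 else w i

@[simp] lemma projMap_none (i : ι) : projMap w i none = w i := rfl

@[simp] lemma projMap_some_self (i : ι) (a : V i) : projMap w i (some ⟨i, a⟩) = a := by
  simp [projMap]

lemma projMap_some_ne {i j : ι} (h : j ≠ i) (a : V j) : projMap w i (some ⟨j, a⟩) = w i := by
  simp [projMap, h]

lemma projMap_adj (i : ι) {x y : Option (Σ j, V j)} (h : (joinTrees T w).Adj x y) :
    projMap w i x = projMap w i y ∨ (T i).Adj (projMap w i x) (projMap w i y) := by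
  rcases (joinTrees_adj T w).1 h with ⟨j, rfl, rfl⟩ | ⟨j, rfl, rfl⟩ | ⟨j, a, b, rfl, rfl, hab⟩
  · left
    by_cases hji : j = i
    · subst hji; simp
    · rw [projMap_some_ne w hji]; simp
  · left
    by_cases hji : j = i
    · subst hji; simp
    · rw [projMap_some_ne w hji]; simp
  · by_cases hji : j = i
    · subst hji; right; simpa using hab
    · left; rw [projMap_some_ne w hji, projMap_some_ne w hji]

lemma exists_walk_proj (i : ι) {x y : Option (Σ j, V j)} (p : (joinTrees T w).Walk x y) :
    ∃ q : (T i).Walk (projMap w i x) (projMap w i y), q.length ≤ p.length := by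
  induction p with
  | nil => exact ⟨.nil, le_rfl⟩
  | cons h p ih =>
    obtain ⟨q, hq⟩ := ih
    rcases projMap_adj T w i h with he | ha
    · exact ⟨q.copy he.symm rfl, by simpa using Nat.le_succ_of_le hq⟩
    · exact ⟨.cons ha q, by simpa using Nat.succ_le_succ hq⟩

def liftHom (i : ι) : T i →g joinTrees T w where
  toFun a := some ⟨i, a⟩
  map_rel' h := (joinTrees_adj T w).2 (Or.inr (Or.inr ⟨i, _, _, rfl, rfl, h⟩))

lemma adj_none_root (i : ι) : (joinTrees T w).Adj none (some ⟨i, w i⟩) :=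
  (joinTrees_adj T w).2 (Or.inl ⟨i, rfl, rfl⟩)

variable (hTc : ∀ i, (T i).Connected)

include hTc in
lemma reachable_none_some (i : ι) (a : V i) :
    (joinTrees T w).Reachable none (some ⟨i, a⟩) :=
  (adj_none_root T w i).reachable.trans (((hTc i).preconnected (w i) a).map (liftHom T w i))

include hTc in
lemma joinTrees_connected : (joinTrees T w).Connected := by
  rw [SimpleGraph.connected_iff]
  refine ⟨fun x y => ?_, ⟨none⟩⟩
  have key : ∀ z : Option (Σ j, V j), (joinTrees T w).Reachable none z := by
    rintro (_ | ⟨j, b⟩)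
    · rfl
    · exact reachable_none_some T w hTc j b
  exact (key x).symm.trans (key y)

include hTc in
lemma dist_some_some_same (i : ι) (a b : V i) :
    (joinTrees T w).dist (some ⟨i, a⟩) (some ⟨i, b⟩) = (T i).dist a b := by
  refine le_antisymm ?_ ?_
  · obtain ⟨p, hp⟩ := ((hTc i).preconnected a b).exists_walk_length_eq_dist
    calc (joinTrees T w).dist (some ⟨i, a⟩) (some ⟨i, b⟩) ≤ (p.map (liftHom T w i)).length :=
          SimpleGraph.dist_le _
      _ = (T i).dist a b := by rw [SimpleGraph.Walk.length_map, hp]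
  · obtain ⟨p, hp⟩ :=
      (((reachable_none_some T w hTc i a).symm.trans
        (reachable_none_some T w hTc i b))).exists_walk_length_eq_dist
    obtain ⟨q, hq⟩ := exists_walk_proj T w i p
    have := SimpleGraph.dist_le q
    simp only [projMap_some_self] at this
    omega

include hTc in
lemma dist_none_some (i : ι) (a : V i) :
    (joinTrees T w).dist none (some ⟨i, a⟩) = (T i).dist (w i) a + 1 := by
  refine le_antisymm ?_ ?_
  · obtain ⟨p, hp⟩ := ((hTc i).preconnected (w i) a).exists_walk_length_eq_dist
    calc (joinTrees T w).dist none (some ⟨i, a⟩)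
        ≤ (SimpleGraph.Walk.cons (adj_none_root T w i) (p.map (liftHom T w i))).length :=
          SimpleGraph.dist_le _
      _ = (T i).dist (w i) a + 1 := by
          exact congrArg (· + 1) ((SimpleGraph.Walk.length_map _ _).trans hp)
  · obtain ⟨p, hp⟩ := (reachable_none_some T w hTc i a).exists_walk_length_eq_dist
    cases p with
    | cons h p' =>
      rename_i mid
      obtain ⟨q, hq⟩ := exists_walk_proj T w i p'
      have hmid : projMap w i mid = w i := by
        rcases (joinTrees_adj T w).1 h with ⟨j, -, rfl⟩ | ⟨j, hx, -⟩ | ⟨j, c, d, hx, -, -⟩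
        · by_cases hji : j = i
          · subst hji; simp
          · exact projMap_some_ne w hji _
        · simp at hx
        · simp at hx
      have h1 : (T i).dist (w i) a ≤ p'.length := by
        have h2 := le_trans (SimpleGraph.dist_le q) hq
        rwa [hmid, projMap_some_self] at h2
      simp only [SimpleGraph.Walk.length_cons] at hp
      omega

lemma walk_avoid_none : ∀ {x y : Option (Σ j, V j)} (p : (joinTrees T w).Walk x y),
    none ∉ p.support → ∀ {j : ι} {a : V j}, x = some ⟨j, a⟩ → ∃ b, y = some ⟨j, b⟩ := by
  intro x y p
  induction p with
  | nil => rintro _ j a rfl; exact ⟨a, rfl⟩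
  | cons h p ih =>
    rename_i u mid y'
    rintro hn j a rfl
    have hpn : none ∉ p.support := fun hmem => hn (by simp [SimpleGraph.Walk.support_cons, hmem])
    rcases (joinTrees_adj T w).1 h with ⟨k, hx, -⟩ | ⟨k, -, hy⟩ | ⟨k, c, d, hx, hy, -⟩
    · simp at hx
    · exact absurd (hy ▸ p.start_mem_support) hpn
    · obtain ⟨rfl, hac⟩ : j = k ∧ HEq a c := by simpa [Sigma.mk.inj_iff] using hx
      exact ih hpn hy

include hTc in
lemma dist_some_some_ne {i j : ι} (hij : i ≠ j) (a : V i) (b : V j) :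
    (joinTrees T w).dist (some ⟨i, a⟩) (some ⟨j, b⟩) =
      (T i).dist (w i) a + (T j).dist (w j) b + 2 := by
  classical
  have hconn := joinTrees_connected T w hTc
  have hda : (joinTrees T w).dist (some ⟨i, a⟩) none = (T i).dist (w i) a + 1 := by
    rw [SimpleGraph.dist_comm, dist_none_some T w hTc]
  have hdb : (joinTrees T w).dist none (some ⟨j, b⟩) = (T j).dist (w j) b + 1 :=
    dist_none_some T w hTc j b
  refine le_antisymm ?_ ?_
  · calc (joinTrees T w).dist (some ⟨i, a⟩) (some ⟨j, b⟩)
        ≤ (joinTrees T w).dist (some ⟨i, a⟩) none + (joinTrees T w).dist none (some ⟨j, b⟩) :=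
          hconn.dist_triangle
      _ = _ := by rw [hda, hdb]; omega
  · obtain ⟨p, hp⟩ := ((reachable_none_some T w hTc i a).symm.trans
      (reachable_none_some T w hTc j b)).exists_walk_length_eq_dist
    have hmem : none ∈ p.support := by
      by_contra hn
      obtain ⟨c, hc⟩ := walk_avoid_none T w p hn rfl
      have hji : j = i ∧ HEq b c := by simpa [Sigma.mk.inj_iff] using hc
      exact hij hji.1.symm
    have hsplit : (p.takeUntil none hmem).length + (p.dropUntil none hmem).length = p.length := by
      rw [← SimpleGraph.Walk.length_append, SimpleGraph.Walk.take_spec]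
    have h1 := SimpleGraph.dist_le (p.takeUntil none hmem)
    have h2 := SimpleGraph.dist_le (p.dropUntil none hmem)
    rw [hda] at h1
    rw [hdb] at h2
    omega

lemma degree_eq_ncard {V' : Type*} [Fintype V'] (G : SimpleGraph V') (v : V')
    [Fintype (G.neighborSet v)] : G.degree v = (G.neighborSet v).ncard := by
  rw [← SimpleGraph.card_neighborSet_eq_degree]
  rw [Set.ncard_eq_toFinset_card', Set.toFinset_card]

lemma mem_pendentFinset {V' : Type*} [Fintype V'] {G : SimpleGraph V'} {v : V'} :
    v ∈ pendentFinset G ↔ (G.neighborSet v).ncard ≤ 1 := by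
  classical
  unfold pendentFinset
  simp only [Finset.mem_filter, Finset.mem_univ, true_and]
  rw [degree_eq_ncard]

lemma adj_some_none_iff {i : ι} {v : V i} :
    (joinTrees T w).Adj (some ⟨i, v⟩) none ↔ v = w i := by
  rw [joinTrees_adj]
  constructor
  · rintro (⟨k, h, -⟩ | ⟨k, h, -⟩ | ⟨k, a, b, -, h, -⟩)
    · simp at h
    · obtain ⟨rfl, hh⟩ : i = k ∧ HEq v (w k) := by simpa [Sigma.mk.inj_iff] using h
      exact eq_of_heq hh
    · simp at h
  · rintro rfl
    exact Or.inr (Or.inl ⟨i, rfl, rfl⟩)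

lemma joinTrees_neighborSet_some (i : ι) (v : V i) :
    (joinTrees T w).neighborSet (some ⟨i, v⟩) =
      (fun a => (some ⟨i, a⟩ : Option (Σ j, V j))) '' (T i).neighborSet v ∪
        {x | x = none ∧ v = w i} := by
  ext x
  cases x with
  | none =>
    simp only [SimpleGraph.mem_neighborSet, Set.mem_union, Set.mem_image, Set.mem_setOf_eq]
    rw [adj_some_none_iff]
    simp
  | some s =>
    obtain ⟨j, b⟩ := s
    simp only [SimpleGraph.mem_neighborSet, Set.mem_union, Set.mem_image, Set.mem_setOf_eq]
    constructor
    · intro h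
      rcases (joinTrees_adj T w).1 h with ⟨k, h1, -⟩ | ⟨k, -, h2⟩ | ⟨k, c, d, h1, h2, hcd⟩
      · simp at h1
      · simp at h2
      · obtain ⟨rfl, hvc⟩ : i = k ∧ HEq v c := by simpa [Sigma.mk.inj_iff] using h1
        obtain rfl : v = c := eq_of_heq hvc
        obtain ⟨rfl, hbd⟩ : j = i ∧ HEq b d := by simpa [Sigma.mk.inj_iff] using h2
        obtain rfl : b = d := eq_of_heq hbd
        first
          | exact Or.inl ⟨b, hcd, rfl⟩
          | exact Or.inl ⟨d, hcd, rfl⟩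
    · rintro (⟨c, hc, heq⟩ | ⟨h1, -⟩)
      · obtain ⟨rfl, hbc⟩ : i = j ∧ HEq c b := by simpa [Sigma.mk.inj_iff] using heq
        obtain rfl : c = b := eq_of_heq hbc
        first
          | exact (joinTrees_adj T w).2 (Or.inr (Or.inr ⟨i, v, b, rfl, rfl, hc⟩))
          | exact (joinTrees_adj T w).2 (Or.inr (Or.inr ⟨i, v, c, rfl, rfl, hc⟩))
      · simp at h1

open scoped Classical in
lemma ncard_neighborSet_some (i : ι) [Fintype (V i)] (v : V i) :
    ((joinTrees T w).neighborSet (some ⟨i, v⟩)).ncard =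
      ((T i).neighborSet v).ncard + (if v = w i then 1 else 0) := by
  have hinj : Function.Injective (fun a => (some ⟨i, a⟩ : Option (Σ j, V j))) := by
    intro a b h
    obtain ⟨-, hab⟩ : i = i ∧ HEq a b := by simpa [Sigma.mk.inj_iff] using h
    exact eq_of_heq hab
  rw [joinTrees_neighborSet_some]
  by_cases hv : v = w i
  · have hset : {x : Option (Σ j, V j) | x = none ∧ v = w i} = {none} := by
      ext x; simp [hv]
    rw [hset, if_pos hv, Set.union_singleton,
      Set.ncard_insert_of_notMem (by simp) ((Set.toFinite _).image _),
      Set.ncard_image_of_injective _ hinj]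
  · have hset : {x : Option (Σ j, V j) | x = none ∧ v = w i} = ∅ := by
      ext x; simp [hv]
    rw [hset, if_neg hv, Set.union_empty, Set.ncard_image_of_injective _ hinj]
    simp

lemma ncard_neighborSet_of_card_one {V' : Type*} [Fintype V'] (G : SimpleGraph V')
    (h : Fintype.card V' = 1) (v : V') : (G.neighborSet v).ncard = 0 := by
  have hsub : ∀ x y : V', x = y := by
    intro x y
    have := Fintype.card_le_one_iff.1 (le_of_eq h)
    exact (this x y)
  have : G.neighborSet v = ∅ := by
    ext x
    simp only [SimpleGraph.mem_neighborSet, Set.mem_empty_iff_false, iff_false]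
    intro hadj
    exact hadj.ne (hsub v x)
  rw [this, Set.ncard_empty]

lemma two_le_ncard_neighborSet_none [Fintype ι] [∀ i, Fintype (V i)]
    (hm : 2 ≤ Fintype.card ι) : 2 ≤ ((joinTrees T w).neighborSet none).ncard := by
  obtain ⟨i0, i1, hne⟩ := Fintype.exists_pair_of_one_lt_card (α := ι) (by omega)
  have h0 : (some ⟨i0, w i0⟩ : Option (Σ j, V j)) ∈ (joinTrees T w).neighborSet none :=
    adj_none_root T w i0
  have h1 : (some ⟨i1, w i1⟩ : Option (Σ j, V j)) ∈ (joinTrees T w).neighborSet none :=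
    adj_none_root T w i1
  have h2 : (1 : ℕ) < ((joinTrees T w).neighborSet none).ncard := by
    rw [Set.one_lt_ncard (Set.toFinite _)]
    exact ⟨_, h0, _, h1, by simp [Sigma.mk.inj_iff, hne]⟩
  omega

open scoped Classical in
lemma pendentFinset_joinTrees [Fintype ι] [∀ i, Fintype (V i)] (hm : 2 ≤ Fintype.card ι)
    (hroot : ∀ i, Fintype.card (V i) = 1 ∨ 2 ≤ ((T i).neighborSet (w i)).ncard) :
    pendentFinset (joinTrees T w) =
      ((univ : Finset ι).sigma (fun i => pendentFinset (T i))).map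
        ⟨some, Option.some_injective _⟩ := by
  ext x
  rw [mem_pendentFinset]
  cases x with
  | none =>
    have h2 := two_le_ncard_neighborSet_none T w hm
    simp only [Finset.mem_map, Function.Embedding.coeFn_mk]
    constructor
    · intro h; omega
    · rintro ⟨y, -, hy⟩; simp at hy
  | some s =>
    obtain ⟨i, v⟩ := s
    rw [ncard_neighborSet_some]
    have hmem : (some ⟨i, v⟩ : Option (Σ j, V j)) ∈
        (((univ : Finset ι).sigma (fun i => pendentFinset (T i))).map
          ⟨some, Option.some_injective _⟩) ↔ v ∈ pendentFinset (T i) := by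
      rw [show (some ⟨i, v⟩ : Option (Σ j, V j)) =
        (⟨some, Option.some_injective _⟩ : (Σ j, V j) ↪ Option (Σ j, V j)) ⟨i, v⟩ from rfl,
        Finset.mem_map']
      simp
    rw [hmem, mem_pendentFinset]
    by_cases hv : v = w i
    · subst hv
      rcases hroot i with h1 | h2
      · rw [ncard_neighborSet_of_card_one _ h1]
        simp
      · rw [if_pos rfl]
        omega
    · rw [if_neg hv]
      simp

lemma sum_sym_exists_half {α : Type*} (s : Finset α) (f : α → α → ℕ)
    (hsym : ∀ u v, f u v = f v u) (h0 : ∀ u, f u u = 0) :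
    ∃ t, ∑ u ∈ s, ∑ v ∈ s, f u v = 2 * t := by
  classical
  induction s using Finset.induction_on with
  | empty => exact ⟨0, by simp⟩
  | insert a s ha ih =>
    obtain ⟨t, ht⟩ := ih
    refine ⟨(∑ v ∈ s, f a v) + t, ?_⟩
    rw [Finset.sum_insert ha, Finset.sum_insert ha, h0,
      Finset.sum_congr rfl (fun u (_ : u ∈ s) => Finset.sum_insert ha (f := f u)),
      Finset.sum_add_distrib, ht]
    have he : ∑ u ∈ s, f u a = ∑ u ∈ s, f a u :=
      Finset.sum_congr rfl (fun u _ => hsym u a)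
    rw [he]
    ring

lemma two_mul_terminalWienerIndex {V' : Type*} [Fintype V'] (G : SimpleGraph V') :
    2 * terminalWienerIndex G = ∑ u ∈ pendentFinset G, ∑ v ∈ pendentFinset G, G.dist u v := by
  obtain ⟨t, ht⟩ := sum_sym_exists_half (pendentFinset G) (fun u v => G.dist u v)
    (fun u v => G.dist_comm) (fun u => G.dist_self)
  rw [terminalWienerIndex, ht]
  omega

end Join

/-- Let `T` be the tree obtained by joining a new vertex `w` to the roots `w i` of `m ≥ 2`
pairwise vertex-disjoint trees `T i`, where each `T i` is either the single vertex `w i` or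
has root of degree at least `2`. If `l i` is the number of pendent vertices of `T i` and
`l = ∑ i, l i`, then
`TW(T) = ∑ i, (TW(T i) + (l - l i) · d'_{T i}(w i) - (l i)²) + l²`. -/
theorem terminal_wiener_index_joinTrees {ι : Type*} [Fintype ι] {V : ι → Type*}
    [∀ i, Fintype (V i)] (T : ∀ i, SimpleGraph (V i)) [∀ i, DecidableRel (T i).Adj]
    (w : ∀ i, V i) (hT : ∀ i, (T i).IsTree) (hm : 2 ≤ Fintype.card ι)
    (hroot : ∀ i, Fintype.card (V i) = 1 ∨ 2 ≤ (T i).degree (w i))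
    (l : ι → ℤ) (hl : ∀ i, l i = ((pendentFinset (T i)).card : ℤ)) :
    (terminalWienerIndex (joinTrees T w) : ℤ) =
      (∑ i, ((terminalWienerIndex (T i) : ℤ)
          + ((∑ j, l j) - l i) * (pendentDistSum (T i) (w i) : ℤ)
          - (l i) ^ 2))
        + (∑ j, l j) ^ 2 := by
  classical
  have hTc : ∀ i, (T i).Connected := fun i => (hT i).isConnected
  have hroot' : ∀ i, Fintype.card (V i) = 1 ∨ 2 ≤ ((T i).neighborSet (w i)).ncard := by
    intro i
    rcases hroot i with h | h
    · exact Or.inl h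
    · exact Or.inr (by rw [← degree_eq_ncard]; exact h)
  have hP := pendentFinset_joinTrees T w hm hroot'
  have key : ((∑ u ∈ pendentFinset (joinTrees T w), ∑ v ∈ pendentFinset (joinTrees T w),
      (joinTrees T w).dist u v : ℕ) : ℤ)
      = 2 * ((∑ i, ((terminalWienerIndex (T i) : ℤ)
          + ((∑ j, l j) - l i) * (pendentDistSum (T i) (w i) : ℤ)
          - (l i) ^ 2)) + (∑ j, l j) ^ 2) := by
    rw [hP]
    push_cast
    rw [Finset.sum_map]
    simp only [Finset.sum_map, Function.Embedding.coeFn_mk]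
    rw [Finset.sum_sigma]
    simp only [Finset.sum_sigma]
    have step1 : ∀ i ∈ (univ : Finset ι), ∑ a ∈ pendentFinset (T i), ∑ j ∈ (univ : Finset ι),
        ∑ b ∈ pendentFinset (T j),
          ((joinTrees T w).dist (some ⟨i, a⟩) (some ⟨j, b⟩) : ℤ)
        = 2 * (terminalWienerIndex (T i) : ℤ)
          + ((∑ j, l j) - l i) * (pendentDistSum (T i) (w i) : ℤ)
          + 2 * l i * ((∑ j, l j) - l i)
          + l i * ((∑ j, (pendentDistSum (T j) (w j) : ℤ))
              - (pendentDistSum (T i) (w i) : ℤ)) := by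
      intro i _
      have hj : ∀ a ∈ pendentFinset (T i), ∑ j ∈ (univ : Finset ι),
          ∑ b ∈ pendentFinset (T j),
            ((joinTrees T w).dist (some ⟨i, a⟩) (some ⟨j, b⟩) : ℤ)
          = (∑ b ∈ pendentFinset (T i), ((T i).dist a b : ℤ))
            + (((T i).dist (w i) a : ℤ) + 2) * ((∑ j, l j) - l i)
            + ((∑ j, (pendentDistSum (T j) (w j) : ℤ))
                - (pendentDistSum (T i) (w i) : ℤ)) := by
        intro a _
        rw [← Finset.add_sum_erase _ _ (Finset.mem_univ i)]
        have t1 : ∑ b ∈ pendentFinset (T i),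
            ((joinTrees T w).dist (some ⟨i, a⟩) (some ⟨i, b⟩) : ℤ)
            = ∑ b ∈ pendentFinset (T i), ((T i).dist a b : ℤ) :=
          Finset.sum_congr rfl fun b _ => by rw [dist_some_some_same T w hTc]
        have t2 : ∑ j ∈ (univ : Finset ι).erase i, ∑ b ∈ pendentFinset (T j),
            ((joinTrees T w).dist (some ⟨i, a⟩) (some ⟨j, b⟩) : ℤ)
            = ∑ j ∈ (univ : Finset ι).erase i,
              ((((T i).dist (w i) a : ℤ) + 2) * l j
                + (pendentDistSum (T j) (w j) : ℤ)) := by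
          refine Finset.sum_congr rfl fun j hj => ?_
          have hij : i ≠ j := fun h => (Finset.mem_erase.1 hj).1 h.symm
          have hb : ∀ b ∈ pendentFinset (T j),
              ((joinTrees T w).dist (some ⟨i, a⟩) (some ⟨j, b⟩) : ℤ)
              = (((T i).dist (w i) a : ℤ) + 2) + ((T j).dist (w j) b : ℤ) := by
            intro b _
            rw [dist_some_some_ne T w hTc hij a b]
            push_cast
            ring
          rw [Finset.sum_congr rfl hb, Finset.sum_add_distrib, Finset.sum_const, hl j,
            pendentDistSum]
          push_cast
          ring
        rw [t1, t2, Finset.sum_add_distrib, ← Finset.mul_sum,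
          Finset.sum_erase_eq_sub (Finset.mem_univ i),
          Finset.sum_erase_eq_sub (Finset.mem_univ i)]
        rw [show ∑ j, l j = ((pendentFinset (T i)).card : ℤ) + ∑ j ∈ univ.erase i, l j from ?_]
        · rw [hl i]
          ring
        · rw [← hl i, Finset.add_sum_erase _ _ (Finset.mem_univ i)]
      rw [Finset.sum_congr rfl hj]
      have h2tw : ∑ a ∈ pendentFinset (T i), ∑ b ∈ pendentFinset (T i), ((T i).dist a b : ℤ)
          = 2 * (terminalWienerIndex (T i) : ℤ) := by
        have h := two_mul_terminalWienerIndex (T i)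
        have h' := congrArg (fun n : ℕ => (n : ℤ)) h
        push_cast at h'
        linarith [h']
      have hterm2 : ∑ a ∈ pendentFinset (T i),
          ((((T i).dist (w i) a : ℤ) + 2) * ((∑ j, l j) - l i))
          = ((pendentDistSum (T i) (w i) : ℤ) + 2 * l i) * ((∑ j, l j) - l i) := by
        rw [← Finset.sum_mul]
        congr 1
        rw [Finset.sum_add_distrib, Finset.sum_const, hl i, pendentDistSum]
        push_cast
        ring
      rw [Finset.sum_add_distrib, Finset.sum_add_distrib, h2tw, hterm2, Finset.sum_const,
        hl i]
      push_cast
      ring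
    rw [Finset.sum_congr rfl step1]
    simp only [Finset.sum_add_distrib, Finset.sum_sub_distrib, sub_mul, mul_sub, mul_assoc,
      ← Finset.mul_sum, ← Finset.sum_mul, pow_two]
    ring
  have h2 := two_mul_terminalWienerIndex (joinTrees T w)
  have h3 : (2 : ℤ) * (terminalWienerIndex (joinTrees T w) : ℤ)
      = 2 * ((∑ i, ((terminalWienerIndex (T i) : ℤ)
          + ((∑ j, l j) - l i) * (pendentDistSum (T i) (w i) : ℤ)
          - (l i) ^ 2)) + (∑ j, l j) ^ 2) := by
    rw [← key, ← h2]
    push_cast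
    ring
  linarith [h3]
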